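/- Let f* : ℝ → ℝ be any function, X ⊂ ℝ a finite set, and I ⊂ ℝ a compact interval containing X. Then there exists a ReLU network f : ℝ → ℝ of width 2 such that f(x) = f*(x) for all x ∈ X and f(I) ⊆ [min_{x∈X} f*(x), max_{x∈X} f*(x)]. -/

import Mathlib

/-- Coordinatewise ReLU on ℝ². -/
def relu2 (v : Fin 2 → ℝ) : Fin 2 → ℝ := fun i => max (v i) 0

/-- Composition of `L` hidden layers of the form `σ ∘ t_ℓ` on ℝ². -/
def hiddenComp : (L : ℕ) → (ℕ → (Fin 2 → ℝ) →ᵃ[ℝ] (Fin 2 → ℝ)) → (Fin 2 → ℝ) → (Fin 2 → ℝ)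
  | 0, _ => id
  | L + 1, ts => (fun v => relu2 (ts L v)) ∘ hiddenComp L ts

/-- `f : ℝ → ℝ` is a ReLU network of width 2: `f = t_L ∘ σ ∘ t_{L-1} ∘ ⋯ ∘ σ ∘ t₁`. -/
def IsReLUNet2 (f : ℝ → ℝ) : Prop :=
  ∃ (L : ℕ) (t1 : ℝ →ᵃ[ℝ] (Fin 2 → ℝ)) (ts : ℕ → (Fin 2 → ℝ) →ᵃ[ℝ] (Fin 2 → ℝ))
    (tL : (Fin 2 → ℝ) →ᵃ[ℝ] ℝ),
    f = fun x => tL (hiddenComp L ts (relu2 (t1 x)))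

noncomputable def layerMap (c : ℝ) (d : Fin 2 → ℝ) : (Fin 2 → ℝ) →ᵃ[ℝ] (Fin 2 → ℝ) :=
  (LinearMap.pi ![LinearMap.proj 0, LinearMap.proj 1 + c • LinearMap.proj 0]).toAffineMap
    + AffineMap.const ℝ (Fin 2 → ℝ) d

lemma layerMap_apply (c : ℝ) (d w : Fin 2 → ℝ) :
    layerMap c d w = ![w 0 + d 0, w 1 + c * w 0 + d 1] := by
  funext i
  fin_cases i <;>
    simp [layerMap, LinearMap.pi_apply, Matrix.cons_val_zero, Matrix.cons_val_one]

noncomputable def inMap (w : Fin 2 → ℝ) : ℝ →ᵃ[ℝ] (Fin 2 → ℝ) :=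
  (LinearMap.toSpanSingleton ℝ (Fin 2 → ℝ) ![(1:ℝ),0]).toAffineMap + AffineMap.const ℝ ℝ w

lemma inMap_apply (w : Fin 2 → ℝ) (x : ℝ) : inMap w x = ![x + w 0, w 1] := by
  funext i
  fin_cases i <;> simp [inMap, LinearMap.toSpanSingleton_apply]

noncomputable def outMap (c : ℝ) : (Fin 2 → ℝ) →ᵃ[ℝ] ℝ :=
  (LinearMap.proj 1).toAffineMap + AffineMap.const ℝ (Fin 2 → ℝ) c

lemma outMap_apply (c : ℝ) (w : Fin 2 → ℝ) : outMap c w = w 1 + c := by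
  simp [outMap]

lemma relu2_pair (p q : ℝ) : relu2 ![p, q] = ![max p 0, max q 0] := by
  funext i; fin_cases i <;> simp [relu2]

lemma max_shift {x c d : ℝ} (h : c ≤ d) :
    max (max (x - c) 0 - (d - c)) 0 = max (x - d) 0 := by
  rcases le_total x c with hx | hx
  · have h1 : max (x - c) 0 = 0 := max_eq_right (by linarith)
    rw [h1, max_eq_right (by linarith), max_eq_right (by linarith)]
  · have h1 : max (x - c) 0 = x - c := max_eq_left (by linarith)
    rw [h1]
    rcases le_total x d with hd | hd
    · rw [max_eq_right (by linarith), max_eq_right (by linarith)]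
    · rw [max_eq_left (by linarith), max_eq_left (by linarith)]
      ring

theorem stmt_11 (fstar : ℝ → ℝ) (X : Finset ℝ) (hX : X.Nonempty)
    (a b : ℝ) (hab : a ≤ b) (hXI : (X : Set ℝ) ⊆ Set.Icc a b) :
    ∃ f : ℝ → ℝ, IsReLUNet2 f ∧ (∀ x ∈ X, f x = fstar x) ∧
      ∀ x ∈ Set.Icc a b, f x ∈ Set.Icc (X.inf' hX fstar) (X.sup' hX fstar) := by
  classical
  set l : List ℝ := X.sort (·≤·) with hl
  have hn : 0 < l.length := by
    rw [hl, Finset.length_sort]; exact hX.card_pos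
  set n : ℕ := l.length with hndef
  have hsorted : l.Pairwise (·<·) := by rw [hl]; exact X.sortedLT_sort.pairwise
  have hminlt : ∀ i : ℕ, min i (n-1) < n := fun i =>
    lt_of_le_of_lt (min_le_right _ _) (Nat.sub_lt hn one_pos)
  set Xf : ℕ → ℝ := fun i => l.getD (min i (n-1)) 0 with hXfdef
  have hget : ∀ i : ℕ, Xf i = l.get ⟨min i (n-1), hminlt i⟩ := fun i =>
    List.getD_eq_get l 0 ⟨_, hminlt i⟩
  have hgetlt : ∀ i : ℕ, ∀ h : i < n, Xf i = l.get ⟨i, h⟩ := by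
    intro i h
    rw [hget i]
    congr 1
    exact Fin.ext (Nat.min_eq_left (Nat.le_pred_of_lt h))
  have hXmem : ∀ i, Xf i ∈ X := by
    intro i
    rw [hget i]
    have hmem : l.get ⟨min i (n-1), hminlt i⟩ ∈ l := List.get_mem l _
    exact (Finset.mem_sort _).1 hmem
  have hXmono : ∀ i j, i ≤ j → Xf i ≤ Xf j := by
    intro i j hij
    rw [hget i, hget j]
    exact (hsorted.sortedLT.strictMono_get).monotone (Fin.mk_le_mk.2 (by omega))
  have hXstrict : ∀ i j, i < j → j < n → Xf i < Xf j := by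
    intro i j hij hj
    rw [hgetlt i (lt_trans hij hj), hgetlt j hj]
    exact hsorted.sortedLT.strictMono_get (Fin.mk_lt_mk.2 hij)
  have hXsurj : ∀ x ∈ X, ∃ j, ∃ _ : j < n, Xf j = x := by
    intro x hx
    have hxl : x ∈ l := by rw [hl]; exact (Finset.mem_sort _).2 hx
    obtain ⟨i, hi⟩ := List.mem_iff_get.1 hxl
    exact ⟨i, i.isLt, by rw [hgetlt i i.isLt]; exact hi⟩
  have hXab : ∀ i, a ≤ Xf i ∧ Xf i ≤ b := by
    intro i
    have := hXI (hXmem i)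
    exact ⟨this.1, this.2⟩
  set Y : ℕ → ℝ := fun i => fstar (Xf i) with hY
  set s : ℕ → ℝ := fun i => if i + 1 < n then (Y (i+1) - Y i) / (Xf (i+1) - Xf i) else 0 with hs
  set k : ℕ → ℝ := fun i => s i - (if i = 0 then 0 else s (i-1)) with hk
  set G : ℕ → ℝ → ℝ := fun r x => Y 0 + ∑ i ∈ Finset.range r, k i * max (x - Xf i) 0 with hG
  set lo := X.inf' hX fstar with hlodef
  set hi := X.sup' hX fstar with hhidef
  have hlo : ∀ i, lo ≤ Y i := fun i => Finset.inf'_le _ (hXmem i)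
  have hhi : ∀ i, Y i ≤ hi := fun i => Finset.le_sup' _ (hXmem i)
  have hsmul : ∀ q, q + 1 < n → s q * (Xf (q+1) - Xf q) = Y (q+1) - Y q := by
    intro q hq
    have hd : Xf q < Xf (q+1) := hXstrict q (q+1) (Nat.lt_succ_self q) hq
    rw [hs]
    simp only [if_pos hq]
    exact div_mul_cancel₀ _ (sub_ne_zero.2 (ne_of_gt hd))
  have key : ∀ q, q < n →
      (∀ j, j ≤ q → G (q+1) (Xf j) = Y j) ∧
      (∀ x, Xf q ≤ x → G (q+1) x = Y q + s q * (x - Xf q)) ∧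
      (∀ x, x ≤ Xf q → lo ≤ G (q+1) x ∧ G (q+1) x ≤ hi) := by
    intro q
    induction q with
    | zero =>
      intro _
      have hG1 : ∀ x, G 1 x = Y 0 + k 0 * max (x - Xf 0) 0 := by
        intro x; simp only [hG, Finset.sum_range_one]
      have hk0 : k 0 = s 0 := by rw [hk]; simp
      refine ⟨?_, ?_, ?_⟩
      · intro j hj
        obtain rfl : j = 0 := Nat.le_zero.mp hj
        rw [hG1]; simp
      · intro x hx
        rw [hG1, hk0, max_eq_left (by linarith)]
      · intro x hx
        rw [hG1, max_eq_right (by linarith)]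
        simp only [mul_zero, add_zero]
        exact ⟨hlo 0, hhi 0⟩
    | succ q ih =>
      intro hq1
      have hq : q < n := Nat.lt_of_succ_lt hq1
      obtain ⟨iha, ihb, ihc⟩ := ih hq
      have hGs : ∀ x, G (q+2) x = G (q+1) x + k (q+1) * max (x - Xf (q+1)) 0 := by
        intro x
        simp only [hG, Finset.sum_range_succ]
        ring
      have hkq : k (q+1) = s (q+1) - s q := by rw [hk]; simp
      have hd : Xf q < Xf (q+1) := hXstrict _ _ (Nat.lt_succ_self q) hq1
      have hsq := hsmul q hq1
      have hYq1 : G (q+1) (Xf (q+1)) = Y (q+1) := by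
        rw [ihb _ (le_of_lt hd)]
        linarith [hsq]
      refine ⟨?_, ?_, ?_⟩
      · intro j hj
        have hXj : Xf j ≤ Xf (q+1) := hXmono _ _ hj
        rw [hGs, max_eq_right (by linarith), mul_zero, add_zero]
        rcases Nat.lt_or_ge j (q+1) with h | h
        · exact iha j (Nat.lt_succ_iff.mp h)
        · have hje : j = q+1 := le_antisymm hj h
          rw [hje]; exact hYq1
      · intro x hx
        have hx0 : Xf q ≤ x := le_trans (le_of_lt hd) hx
        rw [hGs, max_eq_left (by linarith), hkq, ihb x hx0]
        linear_combination hsq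
      · intro x hx
        rw [hGs, max_eq_right (by linarith), mul_zero, add_zero]
        rcases le_total x (Xf q) with h | h
        · exact ihc x h
        · rw [ihb x h]
          constructor
          · have key2 : (Y q + s q * (x - Xf q) - lo) * (Xf (q+1) - Xf q)
                = (Y q - lo) * (Xf (q+1) - x) + (Y (q+1) - lo) * (x - Xf q) := by
              linear_combination (x - Xf q) * hsq
            have h1 : 0 ≤ (Y q + s q * (x - Xf q) - lo) * (Xf (q+1) - Xf q) := by
              rw [key2]
              have := hlo q; have := hlo (q+1)
              have := mul_nonneg (by linarith : (0:ℝ) ≤ Y q - lo) (by linarith : (0:ℝ) ≤ Xf (q+1) - x)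
              have := mul_nonneg (by linarith : (0:ℝ) ≤ Y (q+1) - lo) (by linarith : (0:ℝ) ≤ x - Xf q)
              linarith
            nlinarith [h1, hd]
          · have key2 : (hi - Y q - s q * (x - Xf q)) * (Xf (q+1) - Xf q)
                = (hi - Y q) * (Xf (q+1) - x) + (hi - Y (q+1)) * (x - Xf q) := by
              linear_combination (-(x - Xf q)) * hsq
            have h1 : 0 ≤ (hi - Y q - s q * (x - Xf q)) * (Xf (q+1) - Xf q) := by
              rw [key2]
              have := hhi q; have := hhi (q+1)
              have := mul_nonneg (by linarith : (0:ℝ) ≤ hi - Y q) (by linarith : (0:ℝ) ≤ Xf (q+1) - x)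
              have := mul_nonneg (by linarith : (0:ℝ) ≤ hi - Y (q+1)) (by linarith : (0:ℝ) ≤ x - Xf q)
              linarith
            nlinarith [h1, hd]
  set M : ℝ := |Y 0| + (∑ i ∈ Finset.range n, |k i|) * (b - a) with hM
  have hmax_le : ∀ (i:ℕ) (x:ℝ), x ≤ b → max (x - Xf i) 0 ≤ b - a := by
    intro i x hx
    exact max_le (by linarith [(hXab i).1]) (by linarith)
  have hMG : ∀ r, r ≤ n → ∀ x, x ≤ b → 0 ≤ M + G r x := by
    intro r hr x hx
    have hterm : ∀ i ∈ Finset.range r, -(|k i| * (b-a)) ≤ k i * max (x - Xf i) 0 := by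
      intro i _
      have h1 := hmax_le i x hx
      have h2 : (0:ℝ) ≤ max (x - Xf i) 0 := le_max_right _ _
      have habs : |k i * max (x - Xf i) 0| ≤ |k i| * (b - a) := by
        rw [abs_mul, abs_of_nonneg h2]
        exact mul_le_mul_of_nonneg_left h1 (abs_nonneg _)
      linarith [neg_abs_le (k i * max (x - Xf i) 0)]
    have hsum1 : -(∑ i ∈ Finset.range r, |k i| * (b-a))
        ≤ ∑ i ∈ Finset.range r, k i * max (x - Xf i) 0 := by
      have := Finset.sum_le_sum hterm
      rw [← Finset.sum_neg_distrib] at *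
      exact this
    have hsum2 : ∑ i ∈ Finset.range r, |k i| * (b-a)
        ≤ (∑ i ∈ Finset.range n, |k i|) * (b-a) := by
      rw [← Finset.sum_mul]
      refine mul_le_mul_of_nonneg_right ?_ (by linarith)
      refine Finset.sum_le_sum_of_subset_of_nonneg (Finset.range_subset_range.2 hr) ?_
      intro i _ _; exact abs_nonneg _
    simp only [hM, hG]
    linarith [hsum1, hsum2, neg_abs_le (Y 0)]
  have hM0 : 0 ≤ M + Y 0 := by
    have h1 : (0:ℝ) ≤ (∑ i ∈ Finset.range n, |k i|) * (b-a) :=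
      mul_nonneg (Finset.sum_nonneg fun i _ => abs_nonneg _) (by linarith)
    rw [hM]
    linarith [neg_abs_le (Y 0)]
  set ts : ℕ → ((Fin 2 → ℝ) →ᵃ[ℝ] (Fin 2 → ℝ)) :=
    fun j => layerMap (k j) ![Xf j - Xf (j+1), 0] with hts
  set t1 : ℝ →ᵃ[ℝ] (Fin 2 → ℝ) := inMap ![-(Xf 0), M + Y 0] with ht1
  set tL : (Fin 2 → ℝ) →ᵃ[ℝ] ℝ := outMap (-M) with htL
  have net : ∀ r, r ≤ n → ∀ x, x ≤ b →
      hiddenComp r ts (relu2 (t1 x)) = ![max (x - Xf r) 0, M + G r x] := by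
    intro r
    induction r with
    | zero =>
      intro _ x hx
      show relu2 (t1 x) = _
      rw [ht1, inMap_apply]
      simp only [Matrix.cons_val_zero, Matrix.cons_val_one, Matrix.head_cons]
      rw [relu2_pair]
      funext i
      fin_cases i
      · show max (x + -(Xf 0)) 0 = max (x - Xf 0) 0
        ring_nf
      · show max (M + Y 0) 0 = M + G 0 x
        rw [max_eq_left hM0]
        simp [hG]
    | succ r ih =>
      intro hr x hx
      have hprev := ih (Nat.le_of_succ_le hr) x hx
      show relu2 (ts r (hiddenComp r ts (relu2 (t1 x)))) = _
      rw [hprev, hts]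
      rw [layerMap_apply]
      simp only [Matrix.cons_val_zero, Matrix.cons_val_one, Matrix.head_cons]
      rw [relu2_pair]
      funext i
      fin_cases i
      · show max (max (x - Xf r) 0 + (Xf r - Xf (r+1))) 0 = max (x - Xf (r+1)) 0
        rw [show max (x - Xf r) 0 + (Xf r - Xf (r+1))
            = max (x - Xf r) 0 - (Xf (r+1) - Xf r) by ring]
        exact max_shift (hXmono r (r+1) (Nat.le_succ r))
      · show max (M + G r x + k r * max (x - Xf r) 0 + 0) 0 = M + G (r+1) x
        have hGr : M + G r x + k r * max (x - Xf r) 0 + 0 = M + G (r+1) x := by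
          simp only [hG, Finset.sum_range_succ]; ring
        rw [hGr, max_eq_left (hMG (r+1) hr x hx)]
  have hn1 : (n-1)+1 = n := Nat.succ_pred_eq_of_pos hn
  have hkey := key (n-1) (Nat.sub_lt hn one_pos)
  rw [hn1] at hkey
  refine ⟨fun x => tL (hiddenComp n ts (relu2 (t1 x))), ⟨n, t1, ts, tL, rfl⟩, ?_, ?_⟩
  · intro x hx
    obtain ⟨j, hj, rfl⟩ := hXsurj x hx
    have hxb : Xf j ≤ b := (hXab j).2
    show tL (hiddenComp n ts (relu2 (t1 (Xf j)))) = fstar (Xf j)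
    rw [net n le_rfl _ hxb, htL, outMap_apply]
    simp only [Matrix.cons_val_one, Matrix.head_cons, Matrix.cons_val_zero]
    rw [hkey.1 j (Nat.le_pred_of_lt hj)]
    simp only [hY]
    ring
  · intro x hx
    obtain ⟨hax, hxb⟩ := hx
    show tL (hiddenComp n ts (relu2 (t1 x))) ∈ Set.Icc lo hi
    rw [net n le_rfl x hxb, htL, outMap_apply]
    simp only [Matrix.cons_val_one, Matrix.head_cons, Matrix.cons_val_zero]
    rw [Set.mem_Icc]
    rcases le_total x (Xf (n-1)) with h | h
    · have hc := hkey.2.2 x h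
      constructor <;> linarith [hc.1, hc.2]
    · have hb2 := hkey.2.1 x h
      have hsn : s (n-1) = 0 := by
        rw [hs]
        simp only [hn1]
        simp
      rw [hsn] at hb2
      simp only [zero_mul, add_zero] at hb2
      rw [hb2]
      constructor <;> linarith [hlo (n-1), hhi (n-1)]
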